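/- Let (M_k)_{k≥0} be a square-integrable martingale with M_0 = 0 with respect to a filtration (ℱ_k)_{k≥0}. Then for every integer k ≥ 1 and all real numbers x > 0 and y > 0, P(|M_k| ≥ x and [M]_k + ⟨M⟩_k ≤ y) ≤ 2·exp(−x²/(2y)). -/

import Mathlib

open MeasureTheory ProbabilityTheory Real

set_option linter.unusedSectionVars false
set_option maxHeartbeats 1000000

lemma bt_exp_quad_le (z : ℝ) : Real.exp (z - z^2/2) ≤ 1 + z + z^2/2 := by
  set u := z - z^2/2 with hu
  have h1 : 1 - u ≤ Real.exp (-u) := by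
    have := Real.add_one_le_exp (-u); linarith
  have h2 : (0:ℝ) < 1 - u := by rw [hu]; nlinarith [sq_nonneg (z-1)]
  have h3 : Real.exp u * Real.exp (-u) = 1 := by rw [← Real.exp_add]; simp
  have h4 : Real.exp u * (1 - u) ≤ 1 := by
    calc Real.exp u * (1 - u) ≤ Real.exp u * Real.exp (-u) :=
      mul_le_mul_of_nonneg_left h1 (Real.exp_pos u).le
    _ = 1 := h3
  have h5 : 1 ≤ (1 + z + z^2/2) * (1 - u) := by rw [hu]; nlinarith [sq_nonneg (z^2)]
  calc Real.exp u ≤ 1 / (1 - u) := (le_div_iff₀ h2).2 h4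
  _ ≤ 1 + z + z^2/2 := (div_le_iff₀ h2).2 h5

noncomputable def btG {Ω : Type*} {m0 : MeasurableSpace Ω} (μ : Measure Ω)
    (ℱ : Filtration ℕ m0) (M : ℕ → Ω → ℝ) (s : ℝ) (n : ℕ) (ω : Ω) : ℝ :=
  Real.exp (s * M n ω - s^2/2 *
    ((∑ i ∈ Finset.Icc 1 n, (M i ω - M (i-1) ω)^2)
     + ∑ i ∈ Finset.Icc 1 n, (μ[fun ω' => (M i ω' - M (i-1) ω')^2 | ℱ (i-1)]) ω))

section BT
variable {Ω : Type*} {m0 : MeasurableSpace Ω} {μ : Measure Ω} [IsProbabilityMeasure μ]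
  {ℱ : Filtration ℕ m0} {M : ℕ → Ω → ℝ}

lemma bt_tel (hM0 : M 0 = 0) (n : ℕ) (ω : Ω) :
    M n ω = ∑ i ∈ Finset.Icc 1 n, (M i ω - M (i-1) ω) := by
  induction n with
  | zero => simp [hM0]
  | succ n ih =>
    rw [Finset.sum_Icc_succ_top (Nat.succ_le_succ (Nat.zero_le n))]
    simp [← ih]

lemma btG_sm (hM : StronglyAdapted ℱ M) (s : ℝ) (n : ℕ) :
    StronglyMeasurable[ℱ n] (btG μ ℱ M s n) := by
  apply Real.continuous_exp.comp_stronglyMeasurable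
  apply StronglyMeasurable.sub
  · exact (hM n).const_mul s
  · apply StronglyMeasurable.const_mul
    apply StronglyMeasurable.add
    · apply Finset.stronglyMeasurable_fun_sum
      intro i hi
      have hi2 : i ≤ n := (Finset.mem_Icc.mp hi).2
      exact (((hM i).mono (ℱ.mono hi2)).sub
        ((hM (i-1)).mono (ℱ.mono ((Nat.sub_le i 1).trans hi2)))).pow 2
    · apply Finset.stronglyMeasurable_fun_sum
      intro i hi
      have hi2 : i - 1 ≤ n := le_trans (Nat.sub_le i 1) (Finset.mem_Icc.mp hi).2
      exact stronglyMeasurable_condExp.mono (ℱ.mono hi2)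

lemma bt_condexp_nonneg :
    ∀ᵐ ω ∂μ, ∀ i : ℕ, 0 ≤ (μ[fun ω' => (M i ω' - M (i-1) ω')^2 | ℱ (i-1)]) ω := by
  rw [ae_all_iff]
  exact fun i => condExp_nonneg (ae_of_all _ fun ω => sq_nonneg _)

lemma btG_bound (hM0 : M 0 = 0) (s : ℝ) (n : ℕ) :
    ∀ᵐ ω ∂μ, btG μ ℱ M s n ω ≤ Real.exp (n/2) := by
  filter_upwards [bt_condexp_nonneg (μ := μ) (ℱ := ℱ) (M := M)] with ω hω
  unfold btG
  apply Real.exp_le_exp.mpr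
  have hP : 0 ≤ ∑ i ∈ Finset.Icc 1 n, (μ[fun ω' => (M i ω' - M (i-1) ω')^2 | ℱ (i-1)]) ω :=
    Finset.sum_nonneg fun i _ => hω i
  have h1 : s * M n ω - s^2/2 * ∑ i ∈ Finset.Icc 1 n, (M i ω - M (i-1) ω)^2 ≤ n/2 := by
    rw [bt_tel hM0 n ω, Finset.mul_sum, Finset.mul_sum, ← Finset.sum_sub_distrib]
    have : ∀ i ∈ Finset.Icc 1 n,
        s * (M i ω - M (i-1) ω) - s^2/2 * (M i ω - M (i-1) ω)^2 ≤ 1/2 := by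
      intro i _
      nlinarith [sq_nonneg (s * (M i ω - M (i-1) ω) - 1)]
    calc _ ≤ ∑ _i ∈ Finset.Icc 1 n, (1:ℝ)/2 := Finset.sum_le_sum this
    _ = n/2 := by rw [Finset.sum_const, Nat.card_Icc]; simp; ring
  nlinarith [sq_nonneg s]

lemma btG_int (hM : StronglyAdapted ℱ M) (hM0 : M 0 = 0) (s : ℝ) (n : ℕ) :
    Integrable (btG μ ℱ M s n) μ := by
  refine Integrable.mono' (integrable_const (Real.exp (n/2)))
    ((btG_sm hM s n).mono (ℱ.le n)).aestronglyMeasurable ?_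
  filter_upwards [btG_bound (ℱ := ℱ) hM0 s n] with ω h
  rw [Real.norm_eq_abs, abs_of_pos (show (0:ℝ) < btG μ ℱ M s n ω from Real.exp_pos _)]
  exact h


lemma btG_integral_le_one (hM : Martingale M ℱ μ) (hM0 : M 0 = 0)
    (hL2 : ∀ k, MemLp (M k) 2 μ) (s : ℝ) (n : ℕ) :
    ∫ ω, btG μ ℱ M s n ω ∂μ ≤ 1 := by
  induction n with
  | zero =>
    have h0 : btG μ ℱ M s 0 = fun _ => 1 := by
      funext ω; unfold btG; simp [hM0]
    rw [h0]; simp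
  | succ n ih => ?_
  set D : Ω → ℝ := fun ω => M (n+1) ω - M n ω with hD
  set D2 : Ω → ℝ := fun ω => D ω^2 with hD2
  set E : Ω → ℝ := μ[D2 | ℱ n] with hE
  set A : Ω → ℝ := fun ω => btG μ ℱ M s n ω * Real.exp (-(s^2/2) * E ω) with hA
  have hGpos : ∀ m ω, 0 < btG μ ℱ M s m ω := fun m ω => Real.exp_pos _
  have hsplit : ∀ ω, btG μ ℱ M s (n+1) ω
      = A ω * Real.exp (s * D ω - s^2/2 * D ω^2) := by
    intro ω
    show btG μ ℱ M s (n+1) ω = btG μ ℱ M s n ω * Real.exp (-(s^2/2) * E ω) * _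
    unfold btG
    rw [Finset.sum_Icc_succ_top (Nat.succ_le_succ (Nat.zero_le n)),
      Finset.sum_Icc_succ_top (Nat.succ_le_succ (Nat.zero_le n)),
      ← Real.exp_add, ← Real.exp_add]
    simp only [Nat.add_sub_cancel]
    rw [hE, hD2, hD]
    congr 1
    ring
  -- basic integrability facts
  have hDint : Integrable D μ := (hM.integrable (n+1)).sub (hM.integrable n)
  have hD2int : Integrable D2 μ := ((hL2 (n+1)).sub (hL2 n)).integrable_sq
  have hEnn : (0:Ω → ℝ) ≤ᵐ[μ] E := condExp_nonneg (ae_of_all _ fun ω => sq_nonneg _)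
  have hGbd : ∀ᵐ ω ∂μ, btG μ ℱ M s n ω ≤ Real.exp (n/2) := btG_bound hM0 s n
  have hGint : ∀ m, Integrable (btG μ ℱ M s m) μ := btG_int hM.stronglyAdapted hM0 s
  have hA_sm : StronglyMeasurable[ℱ n] A :=
    (btG_sm hM.stronglyAdapted s n).mul
      (Real.continuous_exp.comp_stronglyMeasurable (stronglyMeasurable_condExp.const_mul _))
  have hA_nonneg : ∀ ω, 0 ≤ A ω := fun ω =>
    mul_nonneg (hGpos n ω).le (Real.exp_pos _).le
  have hA_bd : ∀ᵐ ω ∂μ, ‖A ω‖ ≤ Real.exp (n/2) := by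
    filter_upwards [hEnn, hGbd] with ω h1 h2
    rw [Real.norm_eq_abs, abs_of_nonneg (hA_nonneg ω)]
    have h3 : Real.exp (-(s^2/2) * E ω) ≤ 1 := by
      rw [Real.exp_le_one_iff]
      have : (0:ℝ) ≤ E ω := h1
      nlinarith [sq_nonneg s]
    calc A ω ≤ btG μ ℱ M s n ω * 1 :=
      mul_le_mul_of_nonneg_left h3 (hGpos n ω).le
    _ ≤ Real.exp (n/2) := by rw [mul_one]; exact h2
  have hA_aesm : AEStronglyMeasurable A μ := (hA_sm.mono (ℱ.le n)).aestronglyMeasurable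
  have hAint : Integrable A μ := by
    refine Integrable.mono' (integrable_const (Real.exp (n/2))) hA_aesm hA_bd
  have hADint : Integrable (A * D) μ := hDint.bdd_mul hA_aesm hA_bd
  have hAD2int : Integrable (A * D2) μ := hD2int.bdd_mul hA_aesm hA_bd
  have hAEint : Integrable (fun ω => A ω * E ω) μ :=
    integrable_condExp.bdd_mul hA_aesm hA_bd
  -- conditional expectation of D is zero
  have hDcond : μ[D | ℱ n] =ᵐ[μ] 0 := by
    have h2 : μ[M (n+1) | ℱ n] =ᵐ[μ] M n := hM.condExp_ae_eq (Nat.le_succ n)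
    have h4 : μ[M n | ℱ n] =ᵐ[μ] M n := hM.condExp_ae_eq le_rfl
    have h3 : μ[D | ℱ n] =ᵐ[μ] μ[M (n+1) | ℱ n] - μ[M n | ℱ n] := by
      rw [hD, show (fun ω => M (n+1) ω - M n ω) = M (n+1) - M n from rfl]
      exact condExp_sub (hM.integrable (n+1)) (hM.integrable n) _
    filter_upwards [h2, h3, h4] with ω e2 e3 e4
    simp only [Pi.zero_apply, e3, Pi.sub_apply, e2, e4, sub_self]
  -- ∫ A * D = 0
  have hintAD : ∫ ω, (A * D) ω ∂μ = 0 := by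
    rw [← integral_condExp (ℱ.le n) (f := A * D)]
    have hpull : μ[A * D | ℱ n] =ᵐ[μ] A * μ[D | ℱ n] :=
      condExp_mul_of_stronglyMeasurable_left hA_sm hADint hDint
    have : μ[A * D | ℱ n] =ᵐ[μ] 0 := by
      filter_upwards [hpull, hDcond] with ω e1 e2
      simp [e1, e2]
    rw [integral_congr_ae this]
    simp
  -- ∫ A * D² = ∫ A * E
  have hintAD2 : ∫ ω, (A * D2) ω ∂μ = ∫ ω, A ω * E ω ∂μ := by
    rw [← integral_condExp (ℱ.le n) (f := A * D2)]
    have hpull : μ[A * D2 | ℱ n] =ᵐ[μ] A * μ[D2 | ℱ n] :=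
      condExp_mul_of_stronglyMeasurable_left hA_sm hAD2int hD2int
    exact integral_congr_ae hpull
  -- pointwise bound and chain of inequalities
  have hRHSint : Integrable (fun ω => A ω * (1 + s * D ω + s^2/2 * D ω^2)) μ := by
    have hg : Integrable (fun ω => 1 + s * D ω + s^2/2 * D ω^2) μ :=
      ((integrable_const 1).add (hDint.const_mul s)).add ((hD2int.const_mul (s^2/2)))
    exact hg.bdd_mul hA_aesm hA_bd
  have step1 : ∫ ω, btG μ ℱ M s (n+1) ω ∂μ
      ≤ ∫ ω, A ω * (1 + s * D ω + s^2/2 * D ω^2) ∂μ := by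
    refine integral_mono (hGint (n+1)) hRHSint ?_
    intro ω
    rw [hsplit ω]
    have h1 : s * D ω - s^2/2 * D ω^2 = s * D ω - (s * D ω)^2/2 := by ring
    have h2 := bt_exp_quad_le (s * D ω)
    rw [h1]
    calc A ω * Real.exp (s * D ω - (s * D ω)^2/2)
        ≤ A ω * (1 + s * D ω + (s * D ω)^2/2) :=
          mul_le_mul_of_nonneg_left h2 (hA_nonneg ω)
    _ = A ω * (1 + s * D ω + s^2/2 * D ω^2) := by ring
  have step2 : ∫ ω, A ω * (1 + s * D ω + s^2/2 * D ω^2) ∂μ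
      = ∫ ω, A ω ∂μ + s^2/2 * ∫ ω, A ω * E ω ∂μ := by
    have hfe : (fun ω => A ω * (1 + s * D ω + s^2/2 * D ω^2))
        = fun ω => (A ω + s * (A * D) ω) + s^2/2 * (A * D2) ω := by
      funext ω; simp only [Pi.mul_apply, hD2]; ring
    have hI1 : Integrable (fun ω => A ω + s * (A * D) ω) μ :=
      hAint.add (hADint.const_mul s)
    have hI2 : Integrable (fun ω => s^2/2 * (A * D2) ω) μ := hAD2int.const_mul (s^2/2)
    have hI3 : Integrable (fun ω => s * (A * D) ω) μ := hADint.const_mul s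
    rw [hfe, integral_add hI1 hI2, integral_add hAint hI3,
      integral_const_mul, integral_const_mul, hintAD, hintAD2]
    ring
  have step3 : ∫ ω, A ω ∂μ + s^2/2 * ∫ ω, A ω * E ω ∂μ ≤ ∫ ω, btG μ ℱ M s n ω ∂μ := by
    have hcomb : ∫ ω, A ω ∂μ + s^2/2 * ∫ ω, A ω * E ω ∂μ
        = ∫ ω, A ω + s^2/2 * (A ω * E ω) ∂μ := by
      have hI4 : Integrable (fun ω => s^2/2 * (A ω * E ω)) μ := hAEint.const_mul (s^2/2)
      rw [integral_add hAint hI4, integral_const_mul]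
    rw [hcomb]
    refine integral_mono_ae (hAint.add (hAEint.const_mul (s^2/2))) (hGint n) ?_
    filter_upwards [hEnn] with ω h1
    have h1' : (0:ℝ) ≤ E ω := h1
    set u := s^2/2 * E ω with hu
    have hu0 : 0 ≤ u := by positivity
    have e1 : Real.exp (-u) * Real.exp u = 1 := by rw [← Real.exp_add]; simp
    have e2 : 1 + u ≤ Real.exp u := by have := Real.add_one_le_exp u; linarith
    have e3 : Real.exp (-u) * (1 + u) ≤ 1 := by
      nlinarith [Real.exp_pos (-u)]
    have hAu : A ω = btG μ ℱ M s n ω * Real.exp (-u) := by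
      rw [hA]; simp only []; rw [hu]; ring_nf
    calc A ω + s^2/2 * (A ω * E ω) = btG μ ℱ M s n ω * (Real.exp (-u) * (1 + u)) := by
          rw [hAu, hu]; ring
    _ ≤ btG μ ℱ M s n ω * 1 := mul_le_mul_of_nonneg_left e3 (hGpos n ω).le
    _ = btG μ ℱ M s n ω := mul_one _
  exact ((step1.trans_eq step2).trans step3).trans ih
end BT

/-- **Bercu–Touati deviation inequality.** For a square-integrable martingale
`M` with `M 0 = 0`, for every `k ≥ 1` and `x, y > 0`,
`P(|M k| ≥ x and [M]_k + ⟨M⟩_k ≤ y) ≤ 2 exp(−x²/(2y))`, where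
`[M]_k = Σ_{i=1}^k (ΔM_i)²` and `⟨M⟩_k = Σ_{i=1}^k E[(ΔM_i)² | ℱ_{i−1}]`. -/
theorem bercu_touati
    {Ω : Type*} {m0 : MeasurableSpace Ω} {μ : Measure Ω} [IsProbabilityMeasure μ]
    (ℱ : Filtration ℕ m0) (M : ℕ → Ω → ℝ)
    (hM : Martingale M ℱ μ) (hM0 : M 0 = 0)
    (hL2 : ∀ k, MemLp (M k) 2 μ)
    (k : ℕ) (hk : 1 ≤ k) (x y : ℝ) (hx : 0 < x) (hy : 0 < y) :
    μ {ω | x ≤ |M k ω| ∧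
        (∑ i ∈ Finset.Icc 1 k, (M i ω - M (i - 1) ω) ^ 2)
          + (∑ i ∈ Finset.Icc 1 k,
              (μ[fun ω' => (M i ω' - M (i - 1) ω') ^ 2 | ℱ (i - 1)]) ω) ≤ y}
      ≤ ENNReal.ofReal (2 * Real.exp (-x ^ 2 / (2 * y))) := by
  have hy' : y ≠ 0 := ne_of_gt hy
  set t := x / y with ht
  have htpos : 0 < t := div_pos hx hy
  set c := Real.exp (x^2/(2*y)) with hc
  have hcpos : 0 < c := Real.exp_pos _
  have key : ∀ s : ℝ, μ {ω | c ≤ btG μ ℱ M s k ω}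
      ≤ ENNReal.ofReal (Real.exp (-x^2/(2*y))) := by
    intro s
    have hint : Integrable (btG μ ℱ M s k) μ := btG_int hM.stronglyAdapted hM0 s k
    have hle := btG_integral_le_one hM hM0 hL2 s k
    have hnn : 0 ≤ᵐ[μ] btG μ ℱ M s k := ae_of_all _ fun ω => (Real.exp_pos _).le
    have h1 : ENNReal.ofReal c * μ {ω | c ≤ btG μ ℱ M s k ω} ≤ 1 := by
      have h2 : {ω | c ≤ btG μ ℱ M s k ω}
          ⊆ {ω | ENNReal.ofReal c ≤ ENNReal.ofReal (btG μ ℱ M s k ω)} :=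
        fun ω h => ENNReal.ofReal_le_ofReal h
      calc ENNReal.ofReal c * μ {ω | c ≤ btG μ ℱ M s k ω}
          ≤ ENNReal.ofReal c
            * μ {ω | ENNReal.ofReal c ≤ ENNReal.ofReal (btG μ ℱ M s k ω)} :=
            mul_le_mul_right (measure_mono h2) _
      _ ≤ ∫⁻ ω, ENNReal.ofReal (btG μ ℱ M s k ω) ∂μ :=
            mul_meas_ge_le_lintegral₀
              (hint.aestronglyMeasurable.aemeasurable.ennreal_ofReal) _
      _ = ENNReal.ofReal (∫ ω, btG μ ℱ M s k ω ∂μ) :=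
            (ofReal_integral_eq_lintegral_ofReal hint hnn).symm
      _ ≤ ENNReal.ofReal 1 := ENNReal.ofReal_le_ofReal hle
      _ = 1 := ENNReal.ofReal_one
    have h3 : μ {ω | c ≤ btG μ ℱ M s k ω} ≤ (ENNReal.ofReal c)⁻¹ :=
      ENNReal.le_inv_iff_mul_le.mpr (by rwa [mul_comm] at h1)
    calc μ {ω | c ≤ btG μ ℱ M s k ω} ≤ (ENNReal.ofReal c)⁻¹ := h3
    _ = ENNReal.ofReal (c⁻¹) := (ENNReal.ofReal_inv_of_pos hcpos).symm
    _ = ENNReal.ofReal (Real.exp (-x^2/(2*y))) := by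
        rw [hc, ← Real.exp_neg, neg_div]
  have hsub : {ω | x ≤ |M k ω| ∧
        (∑ i ∈ Finset.Icc 1 k, (M i ω - M (i - 1) ω) ^ 2)
          + (∑ i ∈ Finset.Icc 1 k,
              (μ[fun ω' => (M i ω' - M (i - 1) ω') ^ 2 | ℱ (i - 1)]) ω) ≤ y}
      ⊆ {ω | c ≤ btG μ ℱ M t k ω} ∪ {ω | c ≤ btG μ ℱ M (-t) k ω} := by
    rintro ω ⟨h1, h2⟩
    have e3 : x^2/(2*y) = t*x - t^2/2*y := by rw [ht]; field_simp; ring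
    rcases le_abs.mp h1 with h3 | h3
    · refine Or.inl ?_
      show c ≤ btG μ ℱ M t k ω
      rw [hc]
      unfold btG
      apply Real.exp_le_exp.mpr
      have e1 : t * x ≤ t * M k ω := mul_le_mul_of_nonneg_left h3 htpos.le
      have e2 : t^2/2 * ((∑ i ∈ Finset.Icc 1 k, (M i ω - M (i - 1) ω) ^ 2)
          + (∑ i ∈ Finset.Icc 1 k,
              (μ[fun ω' => (M i ω' - M (i - 1) ω') ^ 2 | ℱ (i - 1)]) ω))
          ≤ t^2/2 * y := mul_le_mul_of_nonneg_left h2 (by positivity)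
      linarith
    · refine Or.inr ?_
      show c ≤ btG μ ℱ M (-t) k ω
      rw [hc]
      unfold btG
      apply Real.exp_le_exp.mpr
      have e1 : t * x ≤ -t * M k ω := by
        have := mul_le_mul_of_nonneg_left h3 htpos.le
        nlinarith
      have e2 : t^2/2 * ((∑ i ∈ Finset.Icc 1 k, (M i ω - M (i - 1) ω) ^ 2)
          + (∑ i ∈ Finset.Icc 1 k,
              (μ[fun ω' => (M i ω' - M (i - 1) ω') ^ 2 | ℱ (i - 1)]) ω))
          ≤ t^2/2 * y := mul_le_mul_of_nonneg_left h2 (by positivity)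
      have e4 : (-t)^2 = t^2 := by ring
      rw [e4]
      linarith
  calc μ {ω | x ≤ |M k ω| ∧
        (∑ i ∈ Finset.Icc 1 k, (M i ω - M (i - 1) ω) ^ 2)
          + (∑ i ∈ Finset.Icc 1 k,
              (μ[fun ω' => (M i ω' - M (i - 1) ω') ^ 2 | ℱ (i - 1)]) ω) ≤ y}
      ≤ μ ({ω | c ≤ btG μ ℱ M t k ω} ∪ {ω | c ≤ btG μ ℱ M (-t) k ω}) :=
        measure_mono hsub
  _ ≤ μ {ω | c ≤ btG μ ℱ M t k ω} + μ {ω | c ≤ btG μ ℱ M (-t) k ω} :=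
        measure_union_le _ _
  _ ≤ ENNReal.ofReal (Real.exp (-x^2/(2*y))) + ENNReal.ofReal (Real.exp (-x^2/(2*y))) :=
        add_le_add (key t) (key (-t))
  _ = ENNReal.ofReal (2 * Real.exp (-x ^ 2 / (2 * y))) := by
        rw [← ENNReal.ofReal_add (Real.exp_nonneg _) (Real.exp_nonneg _)]
        congr 1
        ring
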